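/- For any sequences a, b : ℕ → R: (a ⊠ b) ⋆ 1 = (a ⋆ 1) ⊙ (b ⋆ 1), i.e. the binomial transform takes the Newton product to the Hadamard product. -/

import Mathlib

open Finset


lemma step_choose (n i k t : ℕ) (hi : i ≤ n) (ht : t ≤ i) :
    n.choose ((i - t) + k) * ((i - t) + k).choose i
      = if t ≤ k then n.choose i * (n - i).choose (k - t) else 0 := by
  by_cases htk : t ≤ k
  · rw [if_pos htk]
    by_cases hn : (i - t) + k ≤ n
    · have h1 : i ≤ (i - t) + k := by omega
      rw [Nat.choose_mul h1]
      have e : (i - t) + k - i = k - t := by omega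
      rw [e]
    · rw [Nat.choose_eq_zero_of_lt (by omega), Nat.zero_mul,
        Nat.choose_eq_zero_of_lt (show n - i < k - t by omega), Nat.mul_zero]
  · rw [if_neg htk, Nat.choose_eq_zero_of_lt (show (i - t) + k < i by omega), Nat.mul_zero]

lemma key_choose (n i k : ℕ) (hi : i ≤ n) (hk : k ≤ n) :
    ∑ j ∈ range (n + 1), n.choose (j + k) * (j + k).choose i * i.choose j
      = n.choose i * n.choose k := by
  rw [← Finset.sum_subset (Finset.range_subset_range.2 (by omega) : range (i+1) ⊆ range (n+1))
      (by intro j _ hj; simp only [mem_range, Nat.lt_succ_iff, not_le] at hj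
          rw [Nat.choose_eq_zero_of_lt hj, Nat.mul_zero])]
  rw [← Finset.sum_range_reflect]
  simp only [Nat.add_sub_cancel]
  have h1 : ∀ t ∈ range (i + 1),
      n.choose ((i - t) + k) * ((i - t) + k).choose i * i.choose (i - t)
        = if t ≤ k then n.choose i * ((n - i).choose (k - t) * i.choose t) else 0 := by
    intro t ht
    simp only [mem_range, Nat.lt_succ_iff] at ht
    rw [step_choose n i k t hi ht, Nat.choose_symm ht]
    split
    · ring
    · exact Nat.zero_mul _
  rw [Finset.sum_congr rfl h1]
  have h2 : ∀ t ∈ range (n + 1),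
      (if t ≤ k then n.choose i * ((n - i).choose (k - t) * i.choose t) else 0)
        = if t ∈ range (k + 1) then n.choose i * ((n - i).choose (k - t) * i.choose t) else 0 := by
    intro t _
    simp [mem_range, Nat.lt_succ_iff]
  rw [Finset.sum_subset (Finset.range_subset_range.2 (by omega) : range (i+1) ⊆ range (n+1))
      (by intro t _ htt; simp only [mem_range, Nat.lt_succ_iff, not_le] at htt
          rw [Nat.choose_eq_zero_of_lt htt]
          simp),
    Finset.sum_congr rfl h2, Finset.sum_ite_mem,
    Finset.inter_eq_right.2 (Finset.range_subset_range.2 (by omega)), ← Finset.mul_sum]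
  congr 1
  have := Nat.add_choose_eq i (n - i) k
  rw [Nat.add_sub_cancel' hi] at this
  rw [this, Finset.Nat.sum_antidiagonal_eq_sum_range_succ_mk]
  exact Finset.sum_congr rfl fun t _ => Nat.mul_comm _ _


def hurwitz {R : Type*} [CommRing R] (a b : ℕ → R) : ℕ → R :=
  fun n => ∑ i ∈ Finset.range (n + 1), (n.choose i : R) * a i * b (n - i)

def hadamard {R : Type*} [CommRing R] (a b : ℕ → R) : ℕ → R :=
  fun n => a n * b n

def newton {R : Type*} [CommRing R] (a b : ℕ → R) : ℕ → R :=
  fun n => ∑ i ∈ Finset.range (n + 1), ∑ j ∈ Finset.range (i + 1),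
    (n.choose i : R) * (i.choose j : R) * a i * b (n - j)

/-- The binomial transform takes the Newton product to the Hadamard product. -/
theorem binomial_transform_newton {R : Type*} [CommRing R] (a b : ℕ → R) :
    hurwitz (newton a b) (fun _ => (1 : R)) =
      hadamard (hurwitz a (fun _ => (1 : R))) (hurwitz b (fun _ => (1 : R))) := by
  funext n
  simp only [hurwitz, newton, hadamard, mul_one]
  calc
    ∑ m ∈ range (n + 1), (n.choose m : R) * ∑ i ∈ range (m + 1), ∑ j ∈ range (i + 1),
        (m.choose i : R) * (i.choose j : R) * a i * b (m - j)
      = ∑ m ∈ range (n + 1), ∑ i ∈ range (n + 1), ∑ j ∈ range (n + 1),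
          (n.choose m : R) * (m.choose i : R) * (i.choose j : R) * a i * b (m - j) := by
        refine Finset.sum_congr rfl fun m hm => ?_
        simp only [mem_range, Nat.lt_succ_iff] at hm
        rw [Finset.mul_sum]
        rw [← Finset.sum_subset (Finset.range_subset_range.2 (by omega) : range (m+1) ⊆ range (n+1))
          (fun i _ hi => by
            simp only [mem_range, Nat.lt_succ_iff, not_le] at hi
            simp [Nat.choose_eq_zero_of_lt hi])]
        refine Finset.sum_congr rfl fun i hi => ?_
        simp only [mem_range, Nat.lt_succ_iff] at hi
        rw [Finset.mul_sum]
        rw [← Finset.sum_subset (Finset.range_subset_range.2 (by omega) : range (i+1) ⊆ range (n+1))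
          (fun j _ hj => by
            simp only [mem_range, Nat.lt_succ_iff, not_le] at hj
            simp [Nat.choose_eq_zero_of_lt hj])]
        exact Finset.sum_congr rfl fun j _ => by ring
    _ = ∑ i ∈ range (n + 1), ∑ j ∈ range (n + 1), ∑ m ∈ range (n + 1),
          (n.choose m : R) * (m.choose i : R) * (i.choose j : R) * a i * b (m - j) := by
        rw [Finset.sum_comm]
        exact Finset.sum_congr rfl fun i _ => Finset.sum_comm
    _ = ∑ i ∈ range (n + 1), ∑ j ∈ range (n + 1), ∑ k ∈ range (n + 1),
          (n.choose (j + k) : R) * ((j + k).choose i : R) * (i.choose j : R) * a i * b k := by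
        refine Finset.sum_congr rfl fun i hi => Finset.sum_congr rfl fun j hj => ?_
        simp only [mem_range, Nat.lt_succ_iff] at hi hj
        rw [← Finset.sum_subset
          (show Finset.Ico j (n+1) ⊆ range (n+1) by
            rw [Finset.range_eq_Ico]; exact Finset.Ico_subset_Ico (Nat.zero_le j) le_rfl)
          (fun m _ hm => by
            simp only [Finset.mem_Ico, mem_range, Nat.lt_succ_iff, not_and, not_le] at hm ⊢
            rcases Nat.lt_or_ge i j with h | h
            · simp [Nat.choose_eq_zero_of_lt h]
            · have : m < j := by
                rcases Finset.mem_range.1 ‹m ∈ range (n+1)› with _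
                omega
              simp [Nat.choose_eq_zero_of_lt (show m < i by omega)])]
        rw [Finset.sum_Ico_eq_sum_range]
        simp only [Nat.add_sub_cancel_left]
        rw [Finset.sum_subset (Finset.range_subset_range.2 (by omega) : range (n+1-j) ⊆ range (n+1))
          (fun k _ hk => by
            simp only [mem_range, not_lt] at hk
            simp [Nat.choose_eq_zero_of_lt (show n < j + k by omega)])]
    _ = ∑ i ∈ range (n + 1), ∑ k ∈ range (n + 1),
          ((n.choose i : R) * a i) * ((n.choose k : R) * b k) := by
        refine Finset.sum_congr rfl fun i hi => ?_
        rw [Finset.sum_comm]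
        refine Finset.sum_congr rfl fun k hk => ?_
        simp only [mem_range, Nat.lt_succ_iff] at hi hk
        have hkey : (∑ j ∈ range (n + 1),
            ((n.choose (j + k) * (j + k).choose i * i.choose j : ℕ) : R))
            = ((n.choose i * n.choose k : ℕ) : R) := by
          rw [← Nat.cast_sum, key_choose n i k hi hk]
        push_cast at hkey
        calc ∑ j ∈ range (n + 1),
              (n.choose (j + k) : R) * ((j + k).choose i : R) * (i.choose j : R) * a i * b k
            = (∑ j ∈ range (n + 1),
                (n.choose (j + k) : R) * ((j + k).choose i : R) * (i.choose j : R)) * a i * b k := by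
              rw [Finset.sum_mul, Finset.sum_mul]
          _ = ((n.choose i : R) * a i) * ((n.choose k : R) * b k) := by
              rw [hkey]; ring
    _ = (∑ i ∈ range (n + 1), (n.choose i : R) * a i) *
          ∑ k ∈ range (n + 1), (n.choose k : R) * b k := by
        rw [Finset.sum_mul_sum]
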